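/- arXiv:2402.01036 — 2 statements merged into one kernel-verified Lean document; each statement's English description precedes it below -/
import Mathlib

section
/- Let λ0 > 0, t0 > 0, CA ≥ 0, and let I : [t0, ∞) → ℝ be a differentiable nonnegative function satisfying I'(t) ≤ -2λ0 I(t) + CA/t for all t ≥ t0. Then there exists a constant C0 > 0 such that I(t) ≤ C0/t for all t ≥ t0. -/
open Set Real

theorem stmt1 (lam0 t0 CA : ℝ) (hlam : 0 < lam0) (ht0 : 0 < t0) (hCA : 0 ≤ CA)
    (I I' : ℝ → ℝ)
    (hdiff : ∀ t ≥ t0, HasDerivAt I (I' t) t)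
    (hnonneg : ∀ t ≥ t0, 0 ≤ I t)
    (hineq : ∀ t ≥ t0, I' t ≤ -2 * lam0 * I t + CA / t) :
    ∃ C0 > 0, ∀ t ≥ t0, I t ≤ C0 / t := by
  set t1 : ℝ := max t0 (1 / lam0) with ht1def
  have ht1_t0 : t0 ≤ t1 := le_max_left _ _
  have ht1pos : 0 < t1 := lt_of_lt_of_le ht0 ht1_t0
  have hlamt1 : 1 ≤ lam0 * t1 := by
    have h := le_max_right t0 (1 / lam0)
    calc (1 : ℝ) = lam0 * (1 / lam0) := by field_simp
      _ ≤ lam0 * t1 := by nlinarith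
  have contI : ContinuousOn I (Icc t0 t1) := fun x hx =>
    ((hdiff x hx.1).continuousAt).continuousWithinAt
  -- Step A: bound I on [t0, t1]
  have hA : ∀ x ∈ Icc t0 t1, I x ≤ I t0 + CA / t0 * (x - t0) := by
    intro x hx
    have := le_gronwallBound_of_liminf_deriv_right_le (f := I) (f' := I')
      (a := t0) (b := t1) (δ := I t0) (K := 0) (ε := CA / t0) contI
      (fun y hy r hr => ((hdiff y hy.1).hasDerivWithinAt.liminf_right_slope_le hr))
      le_rfl
      (fun y hy => by
        have hy0 : t0 ≤ y := hy.1
        have hIy := hnonneg y hy0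
        have h1 := hineq y hy0
        have hdiv : CA / y ≤ CA / t0 := div_le_div_of_nonneg_left hCA ht0 hy0
        nlinarith) x hx
    simpa [gronwallBound_K0] using this
  set B : ℝ := I t0 + CA / t0 * (t1 - t0) with hBdef
  have h0t0 : 0 ≤ CA / t0 := div_nonneg hCA ht0.le
  have hBnn : 0 ≤ B := by
    rw [hBdef]
    nlinarith [hnonneg t0 le_rfl, mul_nonneg h0t0 (sub_nonneg.mpr ht1_t0)]
  have hAB : ∀ x ∈ Icc t0 t1, I x ≤ B := by
    intro x hx
    have h1 := hA x hx
    have h2 : CA / t0 * (x - t0) ≤ CA / t0 * (t1 - t0) :=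
      mul_le_mul_of_nonneg_left (by linarith [hx.2]) h0t0
    rw [hBdef]; linarith
  -- Step B: bound J t = t * I t for t ≥ t1
  set J : ℝ → ℝ := fun t => t * I t with hJdef
  set J' : ℝ → ℝ := fun t => I t + t * I' t with hJ'def
  have hJd : ∀ t ≥ t0, HasDerivAt J (J' t) t := by
    intro t ht
    have := (hasDerivAt_id t).mul (hdiff t ht)
    simpa [J, J', one_mul, Pi.mul_def] using this
  have hJt1 : J t1 ≤ t1 * B := by
    have := hAB t1 ⟨ht1_t0, le_rfl⟩
    have := hnonneg t1 ht1_t0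
    simp only [J]
    nlinarith
  have hJnn : 0 ≤ J t1 := mul_nonneg ht1pos.le (hnonneg t1 ht1_t0)
  have hB2 : ∀ t ≥ t1, J t ≤ J t1 + CA / lam0 := by
    intro t ht
    have contJ : ContinuousOn J (Icc t1 t) := fun x hx =>
      ((hJd x (le_trans ht1_t0 hx.1)).continuousAt).continuousWithinAt
    have key := le_gronwallBound_of_liminf_deriv_right_le (f := J) (f' := J')
      (a := t1) (b := t) (δ := J t1) (K := -lam0) (ε := CA) contJ
      (fun y hy r hr =>
        ((hJd y (le_trans ht1_t0 hy.1)).hasDerivWithinAt.liminf_right_slope_le hr))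
      le_rfl
      (fun y hy => by
        have hy1 : t1 ≤ y := hy.1
        have hy0 : t0 ≤ y := le_trans ht1_t0 hy1
        have hIy := hnonneg y hy0
        have h1 := hineq y hy0
        have hypos : 0 < y := lt_of_lt_of_le ht1pos hy1
        have hlamy : 1 ≤ lam0 * y := le_trans hlamt1 (by nlinarith)
        have hca : y * (CA / y) = CA := by field_simp
        simp only [J, J']
        nlinarith [mul_le_mul_of_nonneg_left h1 hypos.le]) t ⟨ht, le_rfl⟩
    rw [gronwallBound_of_K_ne_0 (by simpa using hlam.ne')] at key
    have hs : 0 ≤ t - t1 := by linarith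
    have hexp1 : Real.exp (-lam0 * (t - t1)) ≤ 1 := by
      apply Real.exp_le_one_iff.mpr; nlinarith
    have hexp0 : 0 < Real.exp (-lam0 * (t - t1)) := Real.exp_pos _
    have hcal : CA / lam0 * (1 - Real.exp (-lam0 * (t - t1))) ≤ CA / lam0 := by
      have h0 : 0 ≤ CA / lam0 := div_nonneg hCA hlam.le
      nlinarith
    have : CA / (-lam0) * (Real.exp (-lam0 * (t - t1)) - 1)
        = CA / lam0 * (1 - Real.exp (-lam0 * (t - t1))) := by
      rw [div_neg]; ring
    nlinarith [key]
  -- assemble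
  have hfin : ∀ t ≥ t0, t * I t ≤ t1 * B + CA / lam0 := by
    intro t ht
    have hdivnn : 0 ≤ CA / lam0 := div_nonneg hCA hlam.le
    rcases le_total t t1 with h | h
    · have hIt := hAB t ⟨ht, h⟩
      have hItnn := hnonneg t ht
      have htnn : (0:ℝ) ≤ t := le_trans ht0.le ht
      have h1 : t * I t ≤ t1 * B := mul_le_mul h hIt hItnn ht1pos.le
      exact h1.trans (le_add_of_nonneg_right hdivnn)
    · calc t * I t = J t := rfl
        _ ≤ J t1 + CA / lam0 := hB2 t h
        _ ≤ t1 * B + CA / lam0 := add_le_add_left hJt1 _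
  refine ⟨t1 * B + CA / lam0 + 1, by positivity, fun t ht => ?_⟩
  have htpos : 0 < t := lt_of_lt_of_le ht0 ht
  rw [le_div_iff₀ htpos]
  calc I t * t = t * I t := mul_comm _ _
    _ ≤ t1 * B + CA / lam0 := hfin t ht
    _ ≤ t1 * B + CA / lam0 + 1 := le_add_of_nonneg_right one_pos.le
end

section
/- Let r > 0, z2 ∈ (0, (r + √(r² + 4r))/2), λ̲ ≤ u ≤ λ̄ with λ̲ > 0, and suppose -λ̄² + 2(r(1 + z2) - z2²)λ̲ - ((1 - z2)r + z2²)² - 2 z2 ρ > 0 and r² + r z2² - λ̄ z2 - (1/2)ρ > 0, where ρ ∈ ℝ. Then the symmetric matrix M(u) = [[z2, (1/2)(r + r z2 + z2² - u)], [(1/2)(r + r z2 + z2² - u), r² + r z2² - z2 u - (1/2)ρ]] is positive definite for every u ∈ [λ̲, λ̄]. -/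
theorem stmt7 (r z2 lamL lamU u ρ : ℝ) (hr : 0 < r)
    (hz2 : z2 ∈ Set.Ioo 0 ((r + Real.sqrt (r ^ 2 + 4 * r)) / 2))
    (hlamL : 0 < lamL) (hu : u ∈ Set.Icc lamL lamU)
    (h1 : -lamU ^ 2 + 2 * (r * (1 + z2) - z2 ^ 2) * lamL
        - ((1 - z2) * r + z2 ^ 2) ^ 2 - 2 * z2 * ρ > 0)
    (h2 : r ^ 2 + r * z2 ^ 2 - lamU * z2 - (1 / 2) * ρ > 0) :
    (!![z2, (1 / 2) * (r + r * z2 + z2 ^ 2 - u);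
        (1 / 2) * (r + r * z2 + z2 ^ 2 - u),
        r ^ 2 + r * z2 ^ 2 - z2 * u - (1 / 2) * ρ]).PosDef := by
  obtain ⟨hz0, hzU⟩ := hz2
  obtain ⟨huL, huU⟩ := hu
  have hs : Real.sqrt (r ^ 2 + 4 * r) ^ 2 = r ^ 2 + 4 * r :=
    Real.sq_sqrt (by nlinarith)
  have hsnn : 0 ≤ Real.sqrt (r ^ 2 + 4 * r) := Real.sqrt_nonneg _
  -- k := r*(1+z2) - z2^2 > 0
  have hsr : r < Real.sqrt (r ^ 2 + 4 * r) := by nlinarith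
  have hk : 0 < r * (1 + z2) - z2 ^ 2 := by
    nlinarith [mul_pos (show (0:ℝ) < Real.sqrt (r ^ 2 + 4 * r) - (2 * z2 - r) by linarith)
      (show (0:ℝ) < Real.sqrt (r ^ 2 + 4 * r) + (2 * z2 - r) by linarith)]
  have hu0 : 0 < u := lt_of_lt_of_le hlamL huL
  -- determinant condition (times 4)
  have hdet : 0 < z2 * (r ^ 2 + r * z2 ^ 2 - z2 * u - (1 / 2) * ρ) * 4
      - (r + r * z2 + z2 ^ 2 - u) ^ 2 := by
    nlinarith [sq_nonneg (lamU - u), mul_pos hz0 hu0]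
  refine Matrix.posDef_iff_dotProduct_mulVec.mpr ⟨?_, ?_⟩
  · ext i j
    fin_cases i <;> fin_cases j <;>
      simp [Matrix.IsHermitian, Matrix.conjTranspose_apply]
  · intro x hx
    have hx' : x 0 ≠ 0 ∨ x 1 ≠ 0 := by
      by_contra h
      push_neg at h
      exact hx (funext fun i => by fin_cases i <;> simp [h.1, h.2])
    simp only [dotProduct, Matrix.mulVec, Fin.sum_univ_two, Matrix.cons_val_zero,
      Matrix.cons_val_one, Matrix.head_cons, Matrix.cons_mulVec, Matrix.cons_dotProduct,
      Matrix.dotProduct_of_isEmpty, Pi.star_apply, star_trivial, Matrix.of_apply]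
    rcases eq_or_ne (x 1) 0 with h1' | h1'
    · have h0 : x 0 ≠ 0 := by tauto
      have hp : 0 < x 0 * x 0 := mul_self_pos.mpr h0
      rw [h1']
      ring_nf
      nlinarith [mul_pos hz0 hp]
    · have hp : 0 < x 1 * x 1 := mul_self_pos.mpr h1'
      nlinarith [sq_nonneg (z2 * x 0 + 1 / 2 * (r + r * z2 + z2 ^ 2 - u) * x 1),
        mul_pos hdet hp, hz0]
end
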